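/- Let V be a finite-dimensional real inner product space and let A, B be symmetric linear endomorphisms of V satisfying BX ∧ AY − BY ∧ AX = 0 in Λ²V for all X, Y ∈ V. Then: (i) if rank A ≥ 2, then ker A ⊆ ker B; (ii) if rank A = 1, then B(ker A) ⊆ im A; and (iii) if 1 ≤ rank A ≤ 2, then rank B ≤ 2. -/

import Mathlib

/- Pointwise linear algebra of the identity BX ∧ AY - BY ∧ AX = 0 for symmetric
endomorphisms of a finite-dimensional real inner product space; the wedge products
are taken in the exterior algebra of V. -/

open Module
open scoped RealInnerProductSpace

section aux
variable {V : Type} [NormedAddCommGroup V] [InnerProductSpace ℝ V]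

/-- The alternating 2-form `x ↦ ⟪u, x 0⟫⟪v, x 1⟫ - ⟪u, x 1⟫⟪v, x 0⟫`. -/
noncomputable def wedgeForm (u v : V) : V [⋀^Fin 2]→ₗ[ℝ] ℝ where
  toFun x := ⟪u, x 0⟫ * ⟪v, x 1⟫ - ⟪u, x 1⟫ * ⟪v, x 0⟫
  map_update_add' := by
    intro _ m i x y
    fin_cases i <;>
      simp [Function.update_apply, inner_add_right] <;> ring
  map_update_smul' := by
    intro _ m i c x
    fin_cases i <;>
      simp [Function.update_apply, inner_smul_right] <;> ring
  map_eq_zero_of_eq' := by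
    intro x i j hij hne
    fin_cases i <;> fin_cases j <;> simp_all <;> ring

noncomputable def wedgeFam (u v : V) : ∀ i : ℕ, V [⋀^Fin i]→ₗ[ℝ] ℝ
  | 2 => wedgeForm u v
  | _ => 0

lemma wedge_eq_zero {u v : V}
    (h : ExteriorAlgebra.ι ℝ u * ExteriorAlgebra.ι ℝ v = 0) :
    u = 0 ∨ ∃ r : ℝ, v = r • u := by
  by_contra hc
  push_neg at hc
  obtain ⟨hu, hv⟩ := hc
  have h0 := congrArg (ExteriorAlgebra.liftAlternating (wedgeFam u v)) h
  rw [map_zero, ExteriorAlgebra.liftAlternating_ι_mul,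
    ExteriorAlgebra.liftAlternating_ι] at h0
  have h1 : (wedgeFam u v (Nat.succ 1)).curryLeft u ![v] = 0 := h0
  have h2 : (wedgeForm u v) (Matrix.vecCons u ![v]) = 0 := h1
  have h3 : ⟪u, u⟫ * ⟪v, v⟫ - ⟪u, v⟫ * ⟪v, u⟫ = 0 := by
    simpa [wedgeForm] using h2
  -- Cauchy-Schwarz strict inequality
  have hlt : ‖⟪u, v⟫‖ < ‖u‖ * ‖v‖ := by
    rcases lt_or_eq_of_le (abs_real_inner_le_norm u v) with h | h
    · simpa using h
    · exfalso
      have := ((@norm_inner_eq_norm_tfae ℝ V _ _ _ u v).out 0 2).mp (by simpa using h)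
      rcases this with h' | h'
      · exact hu h'
      · exact hv h'.choose h'.choose_spec
  have hsq : ⟪u, v⟫ * ⟪u, v⟫ < (‖u‖ * ‖v‖) * (‖u‖ * ‖v‖) := by
    calc ⟪u, v⟫ * ⟪u, v⟫ = ‖⟪u, v⟫‖ * ‖⟪u, v⟫‖ := by
          rw [Real.norm_eq_abs, abs_mul_abs_self]
      _ < (‖u‖ * ‖v‖) * (‖u‖ * ‖v‖) := by
          apply mul_self_lt_mul_self (norm_nonneg _) hlt
  have e1 : ⟪v, u⟫ = ⟪u, v⟫ := real_inner_comm u v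
  have e2 := real_inner_self_eq_norm_mul_norm u
  have e3 := real_inner_self_eq_norm_mul_norm v
  rw [e1, e2, e3] at h3
  nlinarith [hsq, h3]
end aux


theorem stmt_18 {V : Type} [NormedAddCommGroup V] [InnerProductSpace ℝ V]
    [FiniteDimensional ℝ V] (A B : V →ₗ[ℝ] V)
    (hA : ∀ x y : V, ⟪A x, y⟫ = ⟪x, A y⟫) (hB : ∀ x y : V, ⟪B x, y⟫ = ⟪x, B y⟫)
    (h : ∀ X Y : V,
      ExteriorAlgebra.ι ℝ (B X) * ExteriorAlgebra.ι ℝ (A Y)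
        - ExteriorAlgebra.ι ℝ (B Y) * ExteriorAlgebra.ι ℝ (A X) = 0) :
    (2 ≤ finrank ℝ (LinearMap.range A) → LinearMap.ker A ≤ LinearMap.ker B) ∧
    (finrank ℝ (LinearMap.range A) = 1 →
      (LinearMap.ker A).map B ≤ LinearMap.range A) ∧
    (1 ≤ finrank ℝ (LinearMap.range A) ∧ finrank ℝ (LinearMap.range A) ≤ 2 →
      finrank ℝ (LinearMap.range B) ≤ 2) := by
  -- If X ∈ ker A, then ι (B X) * ι (A Y) = 0 for all Y
  have hz : ∀ X ∈ LinearMap.ker A, ∀ Y : V,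
      ExteriorAlgebra.ι ℝ (B X) * ExteriorAlgebra.ι ℝ (A Y) = 0 := by
    intro X hX Y
    have h1 := h X Y
    rw [LinearMap.mem_ker.mp hX, map_zero] at h1
    simpa using h1
  have key1 : ∀ X ∈ LinearMap.ker A, ∀ Y : V,
      B X = 0 ∨ ∃ r : ℝ, A Y = r • B X := fun X hX Y => wedge_eq_zero (hz X hX Y)
  have key2 : ∀ X ∈ LinearMap.ker A, ∀ Y : V,
      A Y = 0 ∨ ∃ r : ℝ, B X = r • A Y := by
    intro X hX Y
    apply wedge_eq_zero
    have h2 := ExteriorAlgebra.ι_add_mul_swap (R := ℝ) (B X) (A Y)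
    rw [hz X hX Y, zero_add] at h2
    exact h2
  -- Part (i)
  have part1 : 2 ≤ finrank ℝ (LinearMap.range A) →
      LinearMap.ker A ≤ LinearMap.ker B := by
    intro hrk X hX
    rw [LinearMap.mem_ker]
    by_contra hBX
    have hsub : LinearMap.range A ≤ Submodule.span ℝ {B X} := by
      rintro _ ⟨Y, rfl⟩
      rcases key1 X hX Y with h0 | ⟨r, hr⟩
      · exact absurd h0 hBX
      · rw [hr]; exact Submodule.smul_mem _ _ (Submodule.mem_span_singleton_self _)
    have h1 : finrank ℝ (LinearMap.range A) ≤ finrank ℝ (Submodule.span ℝ {B X}) :=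
      Submodule.finrank_mono hsub
    rw [finrank_span_singleton hBX] at h1
    omega
  -- Part (ii)
  have part2 : finrank ℝ (LinearMap.range A) = 1 →
      (LinearMap.ker A).map B ≤ LinearMap.range A := by
    intro hrk
    have hAne : ∃ Y : V, A Y ≠ 0 := by
      by_contra hc
      push_neg at hc
      have : LinearMap.range A = ⊥ := LinearMap.range_eq_bot.mpr (by ext x; exact hc x)
      rw [this] at hrk
      simp at hrk
    obtain ⟨Y0, hY0⟩ := hAne
    rintro _ ⟨X, hX, rfl⟩
    rcases key2 X hX Y0 with h0 | ⟨r, hr⟩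
    · exact absurd h0 hY0
    · rw [hr, ← map_smul]
      exact LinearMap.mem_range_self A (r • Y0)
  refine ⟨part1, part2, ?_⟩
  -- Part (iii)
  rintro ⟨hge, hle⟩
  rcases Nat.lt_or_ge (finrank ℝ (LinearMap.range A)) 2 with hlt | hge2
  · -- rank A = 1
    have hrk1 : finrank ℝ (LinearMap.range A) = 1 := by omega
    set K := LinearMap.ker A with hK
    have hsup : K ⊔ Kᗮ = ⊤ := Submodule.sup_orthogonal_of_hasOrthogonalProjection
    have hrange : LinearMap.range B = K.map B ⊔ Kᗮ.map B := by
      rw [← Submodule.map_sup, hsup, Submodule.map_top]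
    have h1 : finrank ℝ (K.map B) ≤ 1 := by
      have := Submodule.finrank_mono (part2 hrk1)
      omega
    have h2 : finrank ℝ (Kᗮ.map B) ≤ 1 := by
      have hm := Submodule.finrank_map_le B Kᗮ
      have ho := K.finrank_add_finrank_orthogonal
      have hrn := LinearMap.finrank_range_add_finrank_ker A
      rw [← hK] at hrn
      omega
    calc finrank ℝ (LinearMap.range B)
        = finrank ℝ ((K.map B ⊔ Kᗮ.map B : Submodule ℝ V) : Submodule ℝ V) := by rw [hrange]
      _ ≤ finrank ℝ (K.map B) + finrank ℝ (Kᗮ.map B) :=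
          Submodule.finrank_add_le_finrank_add_finrank _ _
      _ ≤ 2 := by omega
  · -- rank A ≥ 2, hence = 2
    have hk := Submodule.finrank_mono (part1 hge2)
    have hrnA := LinearMap.finrank_range_add_finrank_ker A
    have hrnB := LinearMap.finrank_range_add_finrank_ker B
    omega
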